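/- Let M, J be positive integers, let W ∈ ℂ^{M×M} be invertible with columns w_1, …, w_M, let X̂_1, …, X̂_J ∈ ℂ^{M×M} be Hermitian positive definite, and let σ_{mj} > 0 be reals for m ∈ {1,…,M}, j ∈ {1,…,J}. Set u_{mj} := w_mᴴ X̂_j w_m, which is a positive real number. Then the FastFCA cost decomposes exactly into an approximate-joint-diagonalization term plus an Itakura–Saito NMF term: −J ln|det W|² + Σ_{m,j} u_{mj}/σ_{mj}² + Σ_{m,j} ln σ_{mj}² = Σ_{j=1}^J D_LD(Wᴴ X̂_j W ∣ ddiag(Wᴴ X̂_j W)) + Σ_{m,j} D_IS(u_{mj} ∣ σ_{mj}²) + Σ_{j=1}^J ln det X̂_j + M·J. -/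

import Mathlib

open Matrix ComplexOrder

/-- The diagonal part of a square matrix (off-diagonal entries nullified). -/
def ddiag {M : ℕ} (A : Matrix (Fin M) (Fin M) ℂ) : Matrix (Fin M) (Fin M) ℂ :=
  Matrix.diagonal (fun m => A m m)

/-- The log-determinant divergence of two (Hermitian positive definite) matrices. -/
noncomputable def DLD {M : ℕ} (Ω₁ Ω₂ : Matrix (Fin M) (Fin M) ℂ) : ℝ :=
  ((Ω₁ * Ω₂⁻¹).trace).re - Real.log ((Ω₁ * Ω₂⁻¹).det.re) - M

/-- The Itakura–Saito divergence of two positive reals. -/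
noncomputable def DIS (a b : ℝ) : ℝ := a / b - Real.log (a / b) - 1

theorem stmt_15 (M J : ℕ) (hM : 0 < M) (hJ : 0 < J)
    (W : Matrix (Fin M) (Fin M) ℂ) (hW : IsUnit W)
    (Xhat : Fin J → Matrix (Fin M) (Fin M) ℂ) (hXhat : ∀ j, (Xhat j).PosDef)
    (σ : Fin M → Fin J → ℝ) (hσ : ∀ m j, 0 < σ m j)
    (u : Fin M → Fin J → ℂ)
    (hu : ∀ m j, u m j =
      star (fun k => W k m) ⬝ᵥ (Xhat j).mulVec (fun k => W k m)) :
    (∀ m j, (u m j).im = 0 ∧ 0 < (u m j).re) ∧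
    -(J : ℝ) * Real.log (‖W.det‖ ^ 2)
        + (∑ m, ∑ j, (u m j).re / (σ m j) ^ 2)
        + (∑ m, ∑ j, Real.log ((σ m j) ^ 2)) =
      (∑ j, DLD (Wᴴ * Xhat j * W) (ddiag (Wᴴ * Xhat j * W)))
        + (∑ m, ∑ j, DIS ((u m j).re) ((σ m j) ^ 2))
        + (∑ j, Real.log ((Xhat j).det.re)) + M * J := by
  -- positivity of u
  have hupos : ∀ m j, (0:ℂ) < u m j := by
    intro m j
    rw [hu m j]
    apply (hXhat j).dotProduct_mulVec_pos
    intro hcol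
    have h0 : W.mulVec (Pi.single m 1) = W.mulVec 0 := by
      funext k
      have := congrFun hcol k
      simpa [Matrix.mulVec, dotProduct, Pi.single_apply] using this
    have hinj := (Matrix.mulVec_injective_iff_isUnit.mpr hW)
    have := congrFun (hinj h0) m
    simp at this
  have hkey : ∀ m j, (u m j).im = 0 ∧ 0 < (u m j).re := by
    intro m j
    have h := hupos m j
    rw [Complex.lt_def] at h
    exact ⟨h.2.symm, by simpa using h.1⟩
  refine ⟨hkey, ?_⟩
  have hure : ∀ m j, (0:ℝ) < (u m j).re := fun m j => (hkey m j).2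
  have huC : ∀ m j, u m j = (((u m j).re : ℝ) : ℂ) := by
    intro m j
    exact Complex.ext rfl (by simp [(hkey m j).1])
  have huCne : ∀ m j, (((u m j).re : ℝ) : ℂ) ≠ 0 :=
    fun m j => Complex.ofReal_ne_zero.mpr (hure m j).ne'
  have hdetW : W.det ≠ 0 := ((Matrix.isUnit_iff_isUnit_det W).mp hW).ne_zero
  have habs : (0:ℝ) < ‖W.det‖ ^ 2 := pow_pos (norm_pos_iff.mpr hdetW) 2
  -- diagonal entries of Ω
  have hdiagΩ : ∀ (j : Fin J) m, (Wᴴ * Xhat j * W) m m = u m j := by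
    intro j m
    rw [hu m j]
    simp [Matrix.mul_apply, Matrix.conjTranspose_apply, dotProduct,
      Matrix.mulVec, Finset.mul_sum, Finset.sum_mul, mul_assoc]
    rw [Finset.sum_comm]
  -- det of Xhat
  have hdetX : ∀ j, (Xhat j).det = ((((Xhat j).det.re : ℝ)) : ℂ) ∧ 0 < (Xhat j).det.re := by
    intro j
    have h := (hXhat j).det_pos
    rw [Complex.lt_def] at h
    exact ⟨Complex.ext rfl (by simp [h.2.symm]), by simpa using h.1⟩
  -- DLD computation per j
  have hDLD : ∀ j, DLD (Wᴴ * Xhat j * W) (ddiag (Wᴴ * Xhat j * W)) =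
      -(Real.log (‖W.det‖ ^ 2)) - Real.log ((Xhat j).det.re)
        + ∑ m, Real.log ((u m j).re) := by
    intro j
    have hdd : ddiag (Wᴴ * Xhat j * W) =
        Matrix.diagonal (fun m => (((u m j).re : ℝ) : ℂ)) := by
      unfold ddiag
      rw [show (fun m => (Wᴴ * Xhat j * W) m m) = fun m => (((u m j).re : ℝ) : ℂ) from
        funext fun m => (hdiagΩ j m).trans (huC m j)]
    have hddinv : (ddiag (Wᴴ * Xhat j * W))⁻¹ =
        Matrix.diagonal (fun m => ((((u m j).re : ℝ)) : ℂ)⁻¹) := by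
      rw [hdd]
      apply Matrix.inv_eq_right_inv
      rw [Matrix.diagonal_mul_diagonal]
      rw [show (fun m => (((u m j).re : ℝ) : ℂ) * ((((u m j).re : ℝ)) : ℂ)⁻¹)
          = fun _ => (1:ℂ) from funext fun m => mul_inv_cancel₀ (huCne m j)]
      rw [Matrix.diagonal_one]
    -- trace
    have htr : ((Wᴴ * Xhat j * W) * (ddiag (Wᴴ * Xhat j * W))⁻¹).trace = (M : ℂ) := by
      rw [hddinv, Matrix.trace]
      have hterm : ∀ m ∈ (Finset.univ : Finset (Fin M)),
          ((Wᴴ * Xhat j * W) * Matrix.diagonal (fun m => ((((u m j).re : ℝ)) : ℂ)⁻¹)) m m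
            = (1:ℂ) := by
        intro m _
        rw [Matrix.mul_diagonal, hdiagΩ j m, huC m j]
        exact mul_inv_cancel₀ (huCne m j)
      simp only [Matrix.diag]
      rw [Finset.sum_congr rfl hterm]
      simp
    -- det
    have hconj : (starRingEnd ℂ) W.det * W.det = ((‖W.det‖ : ℝ) : ℂ) ^ 2 := by
      rw [mul_comm, Complex.mul_conj, Complex.normSq_eq_norm_sq]
      push_cast; ring
    have hdet : ((Wᴴ * Xhat j * W) * (ddiag (Wᴴ * Xhat j * W))⁻¹).det =
        ((‖W.det‖ ^ 2 * (Xhat j).det.re * (∏ m, (u m j).re)⁻¹ : ℝ) : ℂ) := by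
      rw [Matrix.det_mul, hddinv, Matrix.det_diagonal]
      rw [Matrix.det_mul, Matrix.det_mul, Matrix.det_conjTranspose, (hdetX j).1]
      rw [show (∏ m, ((((u m j).re : ℝ)) : ℂ)⁻¹) = (((∏ m, (u m j).re)⁻¹ : ℝ) : ℂ) by
        push_cast [Finset.prod_inv_distrib]; ring]
      rw [Complex.star_def]
      push_cast
      simp only [Complex.ofReal_re, Complex.ofReal_pow]
      linear_combination (((Xhat j).det.re : ℂ) * (∏ m, ((u m j).re : ℂ))⁻¹) * hconj
    rw [DLD, htr, hdet, Complex.ofReal_re, Complex.natCast_re]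
    have hprodpos : (0:ℝ) < ∏ m, (u m j).re := Finset.prod_pos (fun m _ => hure m j)
    rw [Real.log_mul (mul_ne_zero habs.ne' (hdetX j).2.ne') (inv_ne_zero hprodpos.ne'),
        Real.log_mul habs.ne' (hdetX j).2.ne', Real.log_inv,
        Real.log_prod (fun m _ => (hure m j).ne')]
    ring
  -- DIS computation
  have hDIS : ∀ m j, DIS ((u m j).re) ((σ m j) ^ 2) =
      (u m j).re / (σ m j) ^ 2 - Real.log ((u m j).re) + Real.log ((σ m j) ^ 2) - 1 := by
    intro m j
    rw [DIS, Real.log_div (hure m j).ne' (pow_pos (hσ m j) 2).ne']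
    ring
  rw [Finset.sum_congr rfl (fun j _ => hDLD j)]
  rw [Finset.sum_congr rfl (fun m _ => Finset.sum_congr rfl (fun j _ => hDIS m j))]
  have hcomm : ∑ j : Fin J, ∑ m : Fin M, Real.log ((u m j).re)
      = ∑ m : Fin M, ∑ j : Fin J, Real.log ((u m j).re) := Finset.sum_comm
  simp only [Finset.sum_add_distrib, Finset.sum_sub_distrib, Finset.sum_const,
    Finset.card_univ, Fintype.card_fin, nsmul_eq_mul, Finset.sum_neg_distrib, hcomm]
  push_cast
  ring
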